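/- Let x, y, a, δ > 0 and f ∈ [0,1) be real numbers. Consider a CPMM pool with reserves (x, y), and the pool after a prior X-to-Y swap of effective size a, whose reserves are (x + a, x·y/(x + a)). Then the exchange rate for a subsequent trade of size δ is strictly larger in the updated pool: (x + a + (1-f)δ)·(x + a) / (x·y·(1-f)) > (x + (1-f)δ)/(y·(1-f)). -/
import Mathlib

/-- A prior X-to-Y swap of effective size `a` strictly increases the CPMM exchange rate for a
subsequent trade of size `δ`: the rate in the updated pool `(x + a, x·y/(x + a))` exceeds the
rate in the original pool `(x, y)`. -/
theorem stmt_11 (x y a δ f : ℝ)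
    (hx : 0 < x) (hy : 0 < y) (ha : 0 < a) (hδ : 0 < δ) (hf0 : 0 ≤ f) (hf1 : f < 1) :
    (x + (1 - f) * δ) / (y * (1 - f)) <
      (x + a + (1 - f) * δ) * (x + a) / (x * y * (1 - f)) := by
  have h1 : 0 < 1 - f := by linarith
  rw [div_lt_div_iff₀ (by positivity) (by positivity)]
  have key : (x + (1 - f) * δ) * x < (x + a + (1 - f) * δ) * (x + a) := by nlinarith [mul_pos ha hx, mul_pos (mul_pos h1 hδ) ha, sq_nonneg a]
  nlinarith [mul_lt_mul_of_pos_right key (mul_pos hy h1)]
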